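/- Let k be a perfect field and let f, g ∈ k[x] be monic irreducible polynomials with f(0) ≠ 0 ≠ g(0). Let E be a splitting field of f·g over k, let B ⊆ E and C ⊆ E be the splitting fields of f and g inside E, set F = B ∩ C, and fix zeros λ ∈ B of f and μ ∈ C of g. Let X be the orbit of the minimal polynomial m_F(λμ) ∈ F[x] under the action of the Galois group Gal(F/k) on F[x] (acting by transforming coefficients). Then the minimal polynomial of λμ over k equals the product of the distinct polynomials in X: m_k(λμ)(x) = ∏_{h ∈ X} h(x). -/

import Mathlib

open Polynomial

theorem stmt15 {k E : Type*} [Field k] [PerfectField k] [Field E] [Algebra k E]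
    (f g : k[X]) (hfm : f.Monic) (hgm : g.Monic) (hf : Irreducible f) (hg : Irreducible g)
    (hf0 : f.eval 0 ≠ 0) (hg0 : g.eval 0 ≠ 0)
    [Polynomial.IsSplittingField k E (f * g)]
    (B C : IntermediateField k E)
    (hB : B = IntermediateField.adjoin k (f.rootSet E))
    (hC : C = IntermediateField.adjoin k (g.rootSet E))
    (lam mu : E) (hlam : lam ∈ f.rootSet E) (hmu : mu ∈ g.rootSet E) :
    ∃ Xorb : Finset (Polynomial ↥(B ⊓ C)),
      (↑Xorb : Set (Polynomial ↥(B ⊓ C))) =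
        {h | ∃ σ : ↥(B ⊓ C) ≃ₐ[k] ↥(B ⊓ C),
          h = (minpoly ↥(B ⊓ C) (lam * mu)).map σ.toRingEquiv.toRingHom} ∧
      (minpoly k (lam * mu)).map (algebraMap k ↥(B ⊓ C)) = ∏ h ∈ Xorb, h := by
  classical
  have hfg0 : (f * g) ≠ 0 := (hfm.mul hgm).ne_zero
  haveI : FiniteDimensional k E := Polynomial.IsSplittingField.finiteDimensional E (f * g)
  have hsplits := Polynomial.IsSplittingField.splits (f := f * g) E
  have hfs : (f.map (algebraMap k E)).Splits :=
    hsplits.of_dvd (Polynomial.map_ne_zero hfg0) (Polynomial.map_dvd _ ⟨g, rfl⟩)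
  have hgs : (g.map (algebraMap k E)).Splits :=
    hsplits.of_dvd (Polynomial.map_ne_zero hfg0) (Polynomial.map_dvd _ ⟨f, mul_comm f g⟩)
  haveI : Normal k B := by
    subst hB
    haveI := IntermediateField.adjoin_rootSet_isSplittingField hfs
    exact Normal.of_isSplittingField f
  haveI : Normal k C := by
    subst hC
    haveI := IntermediateField.adjoin_rootSet_isSplittingField hgs
    exact Normal.of_isSplittingField g
  haveI : Normal k ↥(B ⊓ C) := inferInstance
  haveI : IsGalois k ↥(B ⊓ C) := ⟨⟩
  set F := ↥(B ⊓ C) with hF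
  set α := lam * mu with hα
  have hαint : IsIntegral k α := Algebra.IsIntegral.isIntegral α
  have hαintF : IsIntegral F α := hαint.tower_top
  set p := minpoly F α with hp
  have hpm : p.Monic := minpoly.monic hαintF
  have hpi : Irreducible p := minpoly.irreducible hαintF
  set G := F ≃ₐ[k] F with hG
  set q := minpoly k α with hq
  have hqm : q.Monic := minpoly.monic hαint
  set qF := q.map (algebraMap k F) with hqF
  have hqFm : qF.Monic := hqm.map _
  have hpdvd : p ∣ qF := by
    apply minpoly.dvd
    rw [hqF, aeval_map_algebraMap]
    exact minpoly.aeval k α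
  have hcomm : ∀ σ : G, (σ.toRingEquiv.toRingHom).comp (algebraMap k F) = algebraMap k F := by
    intro σ; ext x; exact congrArg Subtype.val (σ.commutes x)
  have hqFinv : ∀ σ : G, qF.map σ.toRingEquiv.toRingHom = qF := by
    intro σ; rw [hqF, Polynomial.map_map, hcomm]
  set Xorb : Finset (Polynomial F) :=
    Finset.image (fun σ : G => p.map σ.toRingEquiv.toRingHom) Finset.univ with hX
  refine ⟨Xorb, ?_, ?_⟩
  · rw [hX, Finset.coe_image, Finset.coe_univ, Set.image_univ]
    ext h
    simp only [Set.mem_range, Set.mem_setOf_eq]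
    exact ⟨fun ⟨σ, hσ⟩ => ⟨σ, hσ.symm⟩, fun ⟨σ, hσ⟩ => ⟨σ, hσ.symm⟩⟩
  have hmem : ∀ h ∈ Xorb, h.Monic ∧ Irreducible h ∧ h ∣ qF := by
    intro h hh
    rw [hX, Finset.mem_image] at hh
    obtain ⟨σ, -, rfl⟩ := hh
    refine ⟨hpm.map _, ?_, ?_⟩
    · have he : p.map σ.toRingEquiv.toRingHom = Polynomial.mapEquiv σ.toRingEquiv p := rfl
      rw [he]
      exact hpi.map _
    · have := Polynomial.map_dvd σ.toRingEquiv.toRingHom hpdvd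
      rwa [hqFinv σ] at this
  set P := ∏ h ∈ Xorb, h with hP
  have hPm : P.Monic := Polynomial.monic_prod_of_monic _ _ fun h hh => (hmem h hh).1
  have hPdvd : P ∣ qF := by
    apply Finset.prod_dvd_of_coprime
    · intro h₁ h₁m h₂ h₂m hne
      obtain ⟨h₁mon, h₁irr, -⟩ := hmem h₁ h₁m
      obtain ⟨h₂mon, h₂irr, -⟩ := hmem h₂ h₂m
      refine (h₁irr.coprime_iff_not_dvd).mpr fun hdvd => hne ?_
      exact Polynomial.eq_of_monic_of_associated h₁mon h₂mon
        (h₁irr.associated_of_dvd h₂irr hdvd)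
    · exact fun h hh => (hmem h hh).2.2
  have hPinv : ∀ τ : G, P.map τ.toRingEquiv.toRingHom = P := by
    intro τ
    have hinj : Function.Injective (Polynomial.map τ.toRingEquiv.toRingHom) :=
      Polynomial.map_injective _ τ.toRingEquiv.injective
    have himg : Xorb.image (Polynomial.map τ.toRingEquiv.toRingHom) = Xorb := by
      rw [hX, Finset.image_image]
      apply Finset.ext
      intro h
      simp only [Finset.mem_image, Finset.mem_univ, true_and, Function.comp]
      constructor
      · rintro ⟨σ, rfl⟩
        refine ⟨σ.trans τ, ?_⟩
        rw [Polynomial.map_map]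
        congr 1
      · rintro ⟨σ, rfl⟩
        refine ⟨σ.trans τ.symm, ?_⟩
        rw [Polynomial.map_map]
        congr 1
        ext x
        exact congrArg Subtype.val (τ.apply_symm_apply (σ x))
    have hmp : P.map τ.toRingEquiv.toRingHom = ∏ h ∈ Xorb, h.map τ.toRingEquiv.toRingHom := by
      rw [hP, Polynomial.map_prod]
    have hpi2 := Finset.prod_image (s := Xorb) (f := fun h : Polynomial F => h)
      (g := Polynomial.map τ.toRingEquiv.toRingHom) (fun a _ b _ hab => hinj hab)
    rw [himg] at hpi2
    rw [hmp, ← hpi2]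
  have hcoeff : ∀ n, P.coeff n ∈ Set.range (algebraMap k F) := by
    intro n
    have hfix : IntermediateField.fixedField (⊤ : Subgroup G) = ⊥ :=
      OrderIso.map_bot (IsGalois.intermediateFieldEquivSubgroup (F := k) (E := F)).symm
    have hmemfix : P.coeff n ∈ IntermediateField.fixedField (⊤ : Subgroup G) := by
      intro gg
      have h3 := congrArg (fun r : Polynomial F => r.coeff n) (hPinv gg.1)
      simpa [Polynomial.coeff_map, Subgroup.smul_def, AlgEquiv.smul_def] using h3
    rw [hfix] at hmemfix
    exact (IntermediateField.mem_bot).mp hmemfix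
  have hlift : P ∈ Polynomial.lifts (algebraMap k F) :=
    (Polynomial.lifts_iff_coeff_lifts P).mpr hcoeff
  obtain ⟨q', hq'map, -, hq'm⟩ := Polynomial.lifts_and_degree_eq_and_monic hlift hPm
  have hpX : p ∈ Xorb := by
    rw [hX, Finset.mem_image]
    refine ⟨1, Finset.mem_univ _, ?_⟩
    have h1 : ((1 : G).toRingEquiv.toRingHom) = RingHom.id F := by ext x; rfl
    rw [h1, Polynomial.map_id]
  have hpP : p ∣ P := by
    have := Finset.dvd_prod_of_mem (fun h : Polynomial F => h) hpX
    simpa [hP] using this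
  have hPαzero : Polynomial.aeval α P = 0 := by
    obtain ⟨r, hr⟩ := hpP
    rw [hr, map_mul]
    rw [hp]
    rw [minpoly.aeval, zero_mul]
  have hq'α : Polynomial.aeval α q' = 0 := by
    have := Polynomial.aeval_map_algebraMap (R := k) (A := F) (B := E) α q'
    rw [hq'map] at this
    rw [← this, hPαzero]
  have hqdvd : q ∣ q' := minpoly.dvd k α hq'α
  have hqFdvdP : qF ∣ P := by
    rw [← hq'map]
    exact Polynomial.map_dvd _ hqdvd
  exact Polynomial.eq_of_monic_of_associated hqFm hPm (associated_of_dvd_dvd hqFdvdP hPdvd)
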